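/- For every h > 0 and every x ∈ ℝ, ∫_ℝ e^{ixξ} (cosh ξ)^{−h} dξ = 2^{h−1} Γ((h+ix)/2) Γ((h−ix)/2) / Γ(h) = 2^{h−1} |Γ((h+ix)/2)|² / Γ(h); in particular the transition density of the additive process with Q(t,ξ) = h(t) ln cosh ξ is p_{t,0}(x) = (2π)^{−1} ∫_ℝ e^{ixξ} e^{−h(t) ln cosh ξ} dξ = (2^{h(t)−2}/π) |Γ((h(t)+ix)/2)|² / Γ(h(t)). -/

import Mathlib

open MeasureTheory Real

/-- `p_{t,0}(x) = (2π)⁻¹ ∫ e^{ixξ} e^{-h(t) ln cosh ξ} dξ`. -/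
noncomputable def pCosh (h : ℝ → ℝ) (t x : ℝ) : ℂ :=
  (((2 * π)⁻¹ : ℝ) : ℂ) *
    ∫ ξ : ℝ, Complex.exp (Complex.I * (x : ℂ) * (ξ : ℂ)) *
      ((Real.exp (-(h t * Real.log (Real.cosh ξ))) : ℝ) : ℂ)

open Set

noncomputable def fmap (ξ : ℝ) : ℝ := Real.exp (2*ξ) / (1 + Real.exp (2*ξ))
noncomputable def fder (ξ : ℝ) : ℝ := 2 * Real.exp (2*ξ) / (1 + Real.exp (2*ξ))^2

lemma oneE_pos (ξ : ℝ) : 0 < 1 + Real.exp (2*ξ) := by positivity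

lemma fmap_hasDeriv (ξ : ℝ) : HasDerivAt fmap (fder ξ) ξ := by
  have h1 : HasDerivAt (fun ξ : ℝ => Real.exp (2*ξ)) (2 * Real.exp (2*ξ)) ξ := by
    simpa [mul_comm] using ((hasDerivAt_id ξ).const_mul 2).exp
  have h2 : HasDerivAt (fun ξ : ℝ => 1 + Real.exp (2*ξ)) (2 * Real.exp (2*ξ)) ξ :=
    (h1.const_add 1)
  have := h1.div h2 (by positivity)
  refine this.congr_deriv ?_
  unfold fder
  field_simp
  ring

lemma fmap_inj : Function.Injective fmap := by
  intro u v huv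
  unfold fmap at huv
  have h1 : (0:ℝ) < 1 + Real.exp (2*u) := oneE_pos u
  have h2 : (0:ℝ) < 1 + Real.exp (2*v) := oneE_pos v
  rw [div_eq_div_iff (by positivity) (by positivity)] at huv
  have : Real.exp (2*u) = Real.exp (2*v) := by nlinarith
  have := Real.exp_injective this
  linarith

lemma fmap_image : fmap '' univ = Ioo (0:ℝ) 1 := by
  ext y
  simp only [image_univ, mem_range, mem_Ioo]
  constructor
  · rintro ⟨ξ, rfl⟩
    have h1 := oneE_pos ξ
    have h2 := Real.exp_pos (2*ξ)
    constructor
    · unfold fmap; positivity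
    · unfold fmap
      rw [div_lt_one h1]; linarith
  · rintro ⟨hy0, hy1⟩
    refine ⟨Real.log (y/(1-y)) / 2, ?_⟩
    unfold fmap
    rw [show 2 * (Real.log (y/(1-y)) / 2) = Real.log (y/(1-y)) by ring,
      Real.exp_log (div_pos hy0 (by linarith))]
    have h1 : (0:ℝ) < 1 - y := by linarith
    field_simp
    ring

lemma pointwise (h x ξ : ℝ) :
    Complex.exp (Complex.I * (x : ℂ) * (ξ : ℂ)) * ((Real.cosh ξ ^ (-h) : ℝ) : ℂ) =
      (2 : ℂ) ^ ((h : ℂ) - 1) *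
        (|fder ξ| • (((fmap ξ : ℝ) : ℂ) ^ ((((h : ℂ) + Complex.I * x) / 2) - 1) *
          (1 - ((fmap ξ : ℝ) : ℂ)) ^ ((((h : ℂ) - Complex.I * x) / 2) - 1))) := by
  have hE : (0:ℝ) < Real.exp (2*ξ) := Real.exp_pos _
  have h1E : (0:ℝ) < 1 + Real.exp (2*ξ) := oneE_pos ξ
  have hfpos : 0 < fmap ξ := by unfold fmap; positivity
  have hflt : fmap ξ < 1 := by unfold fmap; rw [div_lt_one h1E]; linarith
  have hdpos : 0 < fder ξ := by unfold fder; positivity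
  -- logs
  have Lf : Real.log (fmap ξ) = 2*ξ - Real.log (1 + Real.exp (2*ξ)) := by
    unfold fmap
    rw [Real.log_div (ne_of_gt hE) (ne_of_gt h1E), Real.log_exp]
  have Lf1 : Real.log (1 - fmap ξ) = -Real.log (1 + Real.exp (2*ξ)) := by
    have : 1 - fmap ξ = 1 / (1 + Real.exp (2*ξ)) := by
      unfold fmap; field_simp; ring
    rw [this, Real.log_div one_ne_zero (ne_of_gt h1E), Real.log_one]
    ring
  have Ld : Real.log (fder ξ) = Real.log 2 + 2*ξ - 2*Real.log (1 + Real.exp (2*ξ)) := by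
    unfold fder
    rw [Real.log_div (by positivity) (by positivity), Real.log_mul two_ne_zero (ne_of_gt hE),
      Real.log_exp, Real.log_pow]
    push_cast; ring
  have Lc : Real.log (Real.cosh ξ) = Real.log (1 + Real.exp (2*ξ)) - Real.log 2 - ξ := by
    have hc : Real.cosh ξ = (1 + Real.exp (2*ξ)) / (2 * Real.exp ξ) := by
      rw [Real.cosh_eq]
      rw [div_eq_div_iff two_ne_zero (by positivity)]
      rw [show (2:ℝ)*ξ = ξ + ξ by ring, Real.exp_add]
      have := Real.exp_neg ξ
      have hx := Real.exp_pos ξ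
      field_simp [this]
      rw [this, mul_add, mul_inv_cancel₀ hx.ne']
      ring
    rw [hc, Real.log_div (by positivity) (by positivity),
      Real.log_mul two_ne_zero (ne_of_gt (Real.exp_pos ξ)), Real.log_exp]
    ring
  -- convert everything to Complex.exp
  have e1 : ((Real.cosh ξ ^ (-h) : ℝ) : ℂ) = Complex.exp (((-h * Real.log (Real.cosh ξ) : ℝ) : ℂ)) := by
    rw [Real.rpow_def_of_pos (Real.cosh_pos ξ), ← Complex.ofReal_exp]
    norm_num [mul_comm]
  have e2 : (2 : ℂ) ^ ((h : ℂ) - 1) = Complex.exp (((h:ℂ) - 1) * ((Real.log 2 : ℝ) : ℂ)) := by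
    rw [Complex.cpow_def_of_ne_zero two_ne_zero]
    congr 1
    rw [show (2:ℂ) = ((2:ℝ):ℂ) by norm_num, Complex.ofReal_log (by norm_num)]
    ring
  have e3 : ((fder ξ : ℝ) : ℂ) = Complex.exp (((Real.log (fder ξ) : ℝ) : ℂ)) := by
    rw [← Complex.ofReal_exp, Real.exp_log hdpos]
  have e4 : (((fmap ξ : ℝ) : ℂ)) ^ ((((h : ℂ) + Complex.I * x) / 2) - 1)
      = Complex.exp (((((h : ℂ) + Complex.I * x) / 2) - 1) * ((Real.log (fmap ξ) : ℝ) : ℂ)) := by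
    rw [Complex.cpow_def_of_ne_zero (by exact_mod_cast ne_of_gt hfpos)]
    rw [Complex.ofReal_log hfpos.le]
    ring_nf
  have e5 : (1 - ((fmap ξ : ℝ) : ℂ)) ^ ((((h : ℂ) - Complex.I * x) / 2) - 1)
      = Complex.exp (((((h : ℂ) - Complex.I * x) / 2) - 1) * ((Real.log (1 - fmap ξ) : ℝ) : ℂ)) := by
    have : (1 : ℂ) - ((fmap ξ : ℝ) : ℂ) = (((1 - fmap ξ : ℝ) : ℝ) : ℂ) := by push_cast; ring
    rw [this, Complex.cpow_def_of_ne_zero (by exact_mod_cast ne_of_gt (by linarith : (0:ℝ) < 1 - fmap ξ))]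
    rw [Complex.ofReal_log (by linarith)]
    ring_nf
  rw [abs_of_pos hdpos, Complex.real_smul, e1, e2, e3, e4, e5,
    ← Complex.exp_add, ← Complex.exp_add, ← Complex.exp_add, ← Complex.exp_add]
  congr 1
  rw [Lf, Lf1, Ld, Lc]
  push_cast
  ring

lemma key (h x : ℝ) (hh : 0 < h) :
    (∫ ξ : ℝ, Complex.exp (Complex.I * (x : ℂ) * (ξ : ℂ)) *
        ((Real.cosh ξ ^ (-h) : ℝ) : ℂ)) =
      (2 : ℂ) ^ ((h : ℂ) - 1) * Complex.Gamma (((h : ℂ) + Complex.I * (x : ℂ)) / 2) *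
        Complex.Gamma (((h : ℂ) - Complex.I * (x : ℂ)) / 2) / Complex.Gamma (h : ℂ) := by
  set a : ℂ := ((h : ℂ) + Complex.I * x) / 2 with ha
  set b : ℂ := ((h : ℂ) - Complex.I * x) / 2 with hb
  have hab : a + b = (h : ℂ) := by rw [ha, hb]; ring
  have hare : 0 < a.re := by
    rw [ha]
    simp [Complex.div_re, Complex.add_re, Complex.mul_re, Complex.normSq]
    positivity
  have hbre : 0 < b.re := by
    rw [hb]
    simp [Complex.div_re, Complex.sub_re, Complex.mul_re, Complex.normSq]
    positivity
  have hΓh : Complex.Gamma (h : ℂ) ≠ 0 := by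
    apply Complex.Gamma_ne_zero
    intro m hm
    have : h = -(m : ℝ) := by exact_mod_cast hm
    have : (0:ℝ) ≤ (m:ℝ) := Nat.cast_nonneg m
    linarith
  have hbeta := Complex.Gamma_mul_Gamma_eq_betaIntegral hare hbre
  rw [hab] at hbeta
  have hrhs : (2 : ℂ) ^ ((h : ℂ) - 1) * Complex.Gamma a * Complex.Gamma b / Complex.Gamma (h:ℂ)
      = (2 : ℂ) ^ ((h : ℂ) - 1) * Complex.betaIntegral a b := by
    field_simp
    exact hbeta
  rw [hrhs]
  -- change of variables
  have hsub := integral_image_eq_integral_abs_deriv_smul (MeasurableSet.univ)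
    (fun ξ _ => (fmap_hasDeriv ξ).hasDerivWithinAt) (fmap_inj.injOn)
    (fun t : ℝ => ((t : ℝ) : ℂ) ^ (a - 1) * (1 - ((t : ℝ) : ℂ)) ^ (b - 1))
  rw [fmap_image] at hsub
  have hbeta2 : Complex.betaIntegral a b
      = ∫ ξ : ℝ, |fder ξ| • (((fmap ξ : ℝ) : ℂ) ^ (a - 1) * (1 - ((fmap ξ : ℝ) : ℂ)) ^ (b - 1)) := by
    unfold Complex.betaIntegral
    rw [intervalIntegral.integral_of_le zero_le_one,
      MeasureTheory.integral_Ioc_eq_integral_Ioo, hsub, MeasureTheory.Measure.restrict_univ]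
  rw [hbeta2, ← MeasureTheory.integral_const_mul]
  exact MeasureTheory.integral_congr_ae (Filter.Eventually.of_forall (fun ξ => pointwise h x ξ))

lemma key2 (h x : ℝ) (hh : 0 < h) :
    (∫ ξ : ℝ, Complex.exp (Complex.I * (x : ℂ) * (ξ : ℂ)) *
        ((Real.cosh ξ ^ (-h) : ℝ) : ℂ)) =
      (((2 : ℝ) ^ (h - 1) *
        ‖Complex.Gamma (((h : ℂ) + Complex.I * (x : ℂ)) / 2)‖ ^ 2 /
          Real.Gamma h : ℝ) : ℂ) := by
  rw [key h x hh]
  have hconj : (((h : ℂ) - Complex.I * (x : ℂ)) / 2) =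
      (starRingEnd ℂ) (((h : ℂ) + Complex.I * (x : ℂ)) / 2) := by
    have h2c : (starRingEnd ℂ) (2:ℂ) = 2 := by simp [Complex.ext_iff]
    simp [map_div₀, map_add, Complex.conj_I, Complex.conj_ofReal, h2c]
    ring
  rw [hconj, Complex.Gamma_conj]
  rw [show (2 : ℂ) ^ ((h : ℂ) - 1) * Complex.Gamma (((h : ℂ) + Complex.I * x) / 2) *
      (starRingEnd ℂ) (Complex.Gamma (((h : ℂ) + Complex.I * x) / 2)) =
      (2 : ℂ) ^ ((h : ℂ) - 1) * (Complex.Gamma (((h : ℂ) + Complex.I * x) / 2) *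
      (starRingEnd ℂ) (Complex.Gamma (((h : ℂ) + Complex.I * x) / 2))) by ring,
    Complex.mul_conj]
  rw [show ((h : ℂ) - 1) = (((h - 1 : ℝ) : ℝ) : ℂ) by push_cast; ring,
    show (2 : ℂ) = ((2 : ℝ) : ℂ) by norm_num,
    ← Complex.ofReal_cpow (by norm_num : (0:ℝ) ≤ 2),
    Complex.Gamma_ofReal, Complex.normSq_eq_norm_sq]
  push_cast
  ring


theorem stmt17 :
    (∀ h : ℝ, 0 < h → ∀ x : ℝ,
      (∫ ξ : ℝ, Complex.exp (Complex.I * (x : ℂ) * (ξ : ℂ)) *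
          ((Real.cosh ξ ^ (-h) : ℝ) : ℂ)) =
        (2 : ℂ) ^ ((h : ℂ) - 1) * Complex.Gamma (((h : ℂ) + Complex.I * (x : ℂ)) / 2) *
          Complex.Gamma (((h : ℂ) - Complex.I * (x : ℂ)) / 2) / Complex.Gamma (h : ℂ) ∧
      (∫ ξ : ℝ, Complex.exp (Complex.I * (x : ℂ) * (ξ : ℂ)) *
          ((Real.cosh ξ ^ (-h) : ℝ) : ℂ)) =
        (((2 : ℝ) ^ (h - 1) *
          ‖Complex.Gamma (((h : ℂ) + Complex.I * (x : ℂ)) / 2)‖ ^ 2 /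
            Real.Gamma h : ℝ) : ℂ)) ∧
    ∀ h : ℝ → ℝ, (∀ t : ℝ, 0 < t → 0 < h t) → ∀ t : ℝ, 0 < t → ∀ x : ℝ,
      pCosh h t x =
        ((((2 : ℝ) ^ (h t - 2) / π) *
          ‖Complex.Gamma (((h t : ℂ) + Complex.I * (x : ℂ)) / 2)‖ ^ 2 /
            Real.Gamma (h t) : ℝ) : ℂ) := by
  refine ⟨fun h hh x => ⟨key h x hh, key2 h x hh⟩, fun h hht t ht x => ?_⟩
  have hh := hht t ht
  have hint : (∫ ξ : ℝ, Complex.exp (Complex.I * (x : ℂ) * (ξ : ℂ)) *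
      ((Real.exp (-(h t * Real.log (Real.cosh ξ))) : ℝ) : ℂ)) =
      (∫ ξ : ℝ, Complex.exp (Complex.I * (x : ℂ) * (ξ : ℂ)) *
      ((Real.cosh ξ ^ (-(h t)) : ℝ) : ℂ)) := by
    congr 1
    ext ξ
    rw [Real.rpow_def_of_pos (Real.cosh_pos ξ)]
    ring_nf
  rw [pCosh, hint, key2 (h t) x hh]
  rw [← Complex.ofReal_mul]
  congr 1
  have h2 : (2:ℝ) ^ (h t - 1) = 2 * (2:ℝ) ^ (h t - 2) := by
    rw [show h t - 1 = 1 + (h t - 2) by ring, Real.rpow_add two_pos, Real.rpow_one]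
  rw [h2]
  have hπ : (π : ℝ) ≠ 0 := Real.pi_ne_zero
  field_simp
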